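/- Let m ≥ 1 and let κ, M > 0. There exists C > 0 depending only on m, M and κ such that: for every D̃ ∈ Matrix (Fin m) (Fin m) ℂ with ‖D̃‖ ≤ M and all eigenvalues of D̃ having real part ≥ κ, and for all blocks R₁ ∈ Matrix (Fin 1) (Fin m) ℂ and R₂ ∈ Matrix (Fin m) (Fin 1) ℂ, there exist N₁ ∈ Matrix (Fin 1) (Fin m) ℂ and N₂ ∈ Matrix (Fin m) (Fin 1) ℂ such that, setting D = fromBlocks 0 0 0 D̃, N = fromBlocks 0 N₁ N₂ 0 and R = fromBlocks 0 R₁ R₂ 0 (all of size (1+m)×(1+m)), the commutator equation D·N − N·D = R holds and ‖N‖ ≤ C·‖R‖. -/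

import Mathlib

open scoped Matrix.Norms.L2Operator
open scoped Matrix

open Matrix

section Aux

variable {p q : Type*} [Fintype p] [Fintype q] [DecidableEq p] [DecidableEq q]

lemma euclid_apply_le (v : EuclideanSpace ℂ p) (i : p) : ‖v i‖ ≤ ‖v‖ := by
  rw [EuclideanSpace.norm_eq]
  have h1 : ‖v i‖ ^ 2 ≤ ∑ j, ‖v j‖ ^ 2 :=
    Finset.single_le_sum (f := fun j => ‖v j‖ ^ 2) (fun j _ => sq_nonneg _) (Finset.mem_univ i)
  calc ‖v i‖ = Real.sqrt (‖v i‖ ^ 2) := by rw [Real.sqrt_sq (norm_nonneg _)]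
    _ ≤ _ := Real.sqrt_le_sqrt h1

lemma l2_norm_le_bound (A : Matrix p q ℂ) (c : ℝ) (hc : 0 ≤ c)
    (h : ∀ x : EuclideanSpace ℂ q,
      ‖(WithLp.equiv 2 (p → ℂ)).symm (A *ᵥ (WithLp.equiv 2 (q → ℂ) x))‖ ≤ c * ‖x‖) :
    ‖A‖ ≤ c := by
  rw [Matrix.l2_opNorm_def]
  refine ContinuousLinearMap.opNorm_le_bound _ hc fun x => ?_
  simpa [LinearEquiv.trans_apply, Matrix.toEuclideanLin_apply] using h x

lemma entry_le_l2_norm (A : Matrix p q ℂ) (i : p) (j : q) : ‖A i j‖ ≤ ‖A‖ := by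
  have h := Matrix.l2_opNorm_mulVec A (EuclideanSpace.single j (1 : ℂ))
  rw [EuclideanSpace.norm_single, norm_one, mul_one] at h
  refine le_trans ?_ h
  have hcomp : ((EuclideanSpace.equiv p ℂ).symm (A *ᵥ (EuclideanSpace.single j (1 : ℂ)))) i
      = A i j := by
    simp [Matrix.mulVec, dotProduct, EuclideanSpace.single_apply]
  calc ‖A i j‖ = ‖((EuclideanSpace.equiv p ℂ).symm (A *ᵥ (EuclideanSpace.single j (1:ℂ)))) i‖ := by
        rw [hcomp]
    _ ≤ _ := euclid_apply_le _ i

lemma l2_norm_stdBasisMatrix (i : p) (j : q) (c : ℂ) :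
    ‖Matrix.single i j c‖ ≤ ‖c‖ := by
  refine l2_norm_le_bound _ _ (norm_nonneg c) fun x => ?_
  have key : (WithLp.equiv 2 (p → ℂ)).symm
      (Matrix.single i j c *ᵥ (WithLp.equiv 2 (q → ℂ) x))
      = EuclideanSpace.single i (c * x j) := by
    ext k
    simp only [Matrix.mulVec, dotProduct, Matrix.single, Matrix.of_apply,
      EuclideanSpace.single_apply, WithLp.equiv_symm_apply, PiLp.toLp_apply, WithLp.equiv_apply, ite_mul,
      zero_mul]
    by_cases hik : i = k <;> simp [hik, Finset.sum_ite_eq, eq_comm, ite_and]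
  rw [key, EuclideanSpace.norm_single, norm_mul]
  exact mul_le_mul_of_nonneg_left (euclid_apply_le x j) (norm_nonneg c)

lemma l2_norm_le_sum_entries (A : Matrix p q ℂ) : ‖A‖ ≤ ∑ i, ∑ j, ‖A i j‖ := by
  conv_lhs => rw [Matrix.matrix_eq_sum_single A]
  refine (norm_sum_le _ _).trans (Finset.sum_le_sum fun i _ => ?_)
  refine (norm_sum_le _ _).trans (Finset.sum_le_sum fun j _ => ?_)
  exact l2_norm_stdBasisMatrix i j (A i j)

lemma abs_det_le (B : Matrix p p ℂ) (b : ℝ) (hb : 0 ≤ b) (h : ∀ i j, ‖B i j‖ ≤ b) :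
    ‖B.det‖ ≤ (Fintype.card p).factorial * b ^ (Fintype.card p) := by
  rw [Matrix.det_apply]
  refine (norm_sum_le _ _).trans ?_
  have key : ∀ σ : Equiv.Perm p, ‖Equiv.Perm.sign σ • ∏ k, B (σ k) k‖ ≤ b ^ Fintype.card p := by
    intro σ
    have h1 : ‖Equiv.Perm.sign σ • ∏ k, B (σ k) k‖ = ‖∏ k, B (σ k) k‖ := by
      rcases Int.units_eq_one_or (Equiv.Perm.sign σ) with hs | hs <;> rw [hs] <;> simp
    rw [h1, norm_prod]
    calc ∏ k, ‖B (σ k) k‖ ≤ ∏ _k : p, b :=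
          Finset.prod_le_prod (fun k _ => norm_nonneg _) (fun k _ => h _ _)
      _ = b ^ Fintype.card p := by rw [Finset.prod_const, Finset.card_univ]
  calc ∑ σ : Equiv.Perm p, ‖Equiv.Perm.sign σ • ∏ k, B (σ k) k‖
      ≤ ∑ _σ : Equiv.Perm p, b ^ Fintype.card p := Finset.sum_le_sum fun σ _ => key σ
    _ = (Fintype.card p).factorial * b ^ Fintype.card p := by
        rw [Finset.sum_const, Finset.card_univ, Fintype.card_perm, nsmul_eq_mul]

lemma prod_abs_ge (κ : ℝ) (hκ : 0 ≤ κ) :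
    ∀ s : Multiset ℂ, (∀ z ∈ s, κ ≤ ‖z‖) → κ ^ Multiset.card s ≤ ‖s.prod‖ := by
  intro s
  induction s using Multiset.induction with
  | empty => simp
  | cons a t ih =>
    intro hmem
    rw [Multiset.prod_cons, Multiset.card_cons, pow_succ', norm_mul]
    exact mul_le_mul (hmem a (Multiset.mem_cons_self a t))
      (ih fun z hz => hmem z (Multiset.mem_cons_of_mem hz))
      (pow_nonneg hκ _) (norm_nonneg _)

end Aux

/-- uniform solvability of the Sylvester (commutator) equation
`D·N − N·D = R` for block matrices `D = bdiag(0, D̃)` with `D̃` having spectral gap `κ`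
and norm bound `M`, and `R` off-block-diagonal, with `‖N‖ ≤ C‖R‖`. -/
theorem stmt8
    (m : ℕ) (hm : 1 ≤ m) (κ M : ℝ) (hκ : 0 < κ) (hM : 0 < M) :
    ∃ C : ℝ, 0 < C ∧
      ∀ Dt : Matrix (Fin m) (Fin m) ℂ, ‖Dt‖ ≤ M →
        (∀ lam ∈ spectrum ℂ Dt, κ ≤ lam.re) →
      ∀ (R₁ : Matrix (Fin 1) (Fin m) ℂ) (R₂ : Matrix (Fin m) (Fin 1) ℂ),
        ∃ (N₁ : Matrix (Fin 1) (Fin m) ℂ) (N₂ : Matrix (Fin m) (Fin 1) ℂ),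
          Matrix.fromBlocks 0 0 0 Dt * Matrix.fromBlocks 0 N₁ N₂ 0 -
            Matrix.fromBlocks 0 N₁ N₂ 0 * Matrix.fromBlocks 0 0 0 Dt =
            Matrix.fromBlocks 0 R₁ R₂ 0 ∧
          ‖Matrix.fromBlocks 0 N₁ N₂ 0‖ ≤ C * ‖Matrix.fromBlocks 0 R₁ R₂ 0‖ := by
  classical
  set b : ℝ := max M 1 with hb
  have hb0 : (0:ℝ) ≤ b := le_trans zero_le_one (le_max_right _ _)
  have hb1 : (1:ℝ) ≤ b := le_max_right _ _
  set c₀ : ℝ := (m:ℝ)^2 * ((m.factorial : ℝ) * b ^ m) / κ ^ m with hc₀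
  have hc₀0 : 0 ≤ c₀ := by positivity
  refine ⟨2 * (m:ℝ)^2 * c₀ + 1, by positivity, ?_⟩
  intro Dt hDtnorm hspec R₁ R₂
  -- eigenvalue facts
  have hsplits : (Matrix.charpoly Dt).Splits := IsAlgClosed.splits _
  have hroots_spec : ∀ z ∈ (Matrix.charpoly Dt).roots, z ∈ spectrum ℂ Dt := by
    intro z hz
    have hroot : (Matrix.charpoly Dt).eval z = 0 := by
      have := Polynomial.isRoot_of_mem_roots hz
      exact this
    have hdet : ((Matrix.scalar (Fin m)) z - Dt).det = 0 := by
      have h1 : (Matrix.charpoly Dt).eval z = ((Matrix.scalar (Fin m)) z - Dt).det := by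
        rw [Matrix.charpoly, eval_det, Matrix.matPolyEquiv_charmatrix]
        simp
      rw [← h1, hroot]
    rw [spectrum.mem_iff]
    intro hunit
    rw [Matrix.isUnit_iff_isUnit_det] at hunit
    have halg : algebraMap ℂ (Matrix (Fin m) (Fin m) ℂ) z = (Matrix.scalar (Fin m)) z := by
      ext i j
      simp [Matrix.algebraMap_matrix_apply, Matrix.scalar_apply, Matrix.diagonal]
    rw [halg, hdet] at hunit
    exact (not_isUnit_zero hunit : False)
  have hroots_re : ∀ z ∈ (Matrix.charpoly Dt).roots, κ ≤ ‖z‖ := by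
    intro z hz
    have := hspec z (hroots_spec z hz)
    exact le_trans this (le_trans (Complex.re_le_norm z) le_rfl)
  have hcard : Multiset.card (Matrix.charpoly Dt).roots = m := by
    rw [(Polynomial.splits_iff_card_roots).mp hsplits, Matrix.charpoly_natDegree_eq_dim,
      Fintype.card_fin]
  have hdetge : κ ^ m ≤ ‖Dt.det‖ := by
    rw [Matrix.det_eq_prod_roots_charpoly]
    have := prod_abs_ge κ hκ.le (Matrix.charpoly Dt).roots hroots_re
    rwa [hcard] at this
  have hκm : (0:ℝ) < κ ^ m := pow_pos hκ m
  have hdetne : Dt.det ≠ 0 := by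
    intro h
    rw [h, norm_zero] at hdetge
    exact absurd hdetge (not_le.mpr hκm)
  have hdetunit : IsUnit Dt.det := isUnit_iff_ne_zero.mpr hdetne
  -- inverse entry bound
  have hadj : ∀ i j, ‖Dt.adjugate i j‖ ≤ (m.factorial : ℝ) * b ^ m := by
    intro i j
    rw [Matrix.adjugate_apply]
    have hcard' : Fintype.card (Fin m) = m := Fintype.card_fin m
    have := abs_det_le (Dt.updateRow j (Pi.single i 1)) b hb0 ?_
    · rwa [hcard'] at this
    · intro k l
      rw [Matrix.updateRow_apply]
      by_cases hk : k = j
      · simp only [hk, if_pos rfl]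
        by_cases hl : l = i
        · subst hl; simp [Pi.single_apply]; exact hb1
        · simp [Pi.single_apply, hl]; exact hb0
      · simp only [if_neg hk]
        exact le_trans (entry_le_l2_norm Dt k l) (le_trans hDtnorm (le_max_left _ _))
  have hinv_entry : ∀ i j, ‖Dt⁻¹ i j‖ ≤ ((m.factorial : ℝ) * b ^ m) / κ ^ m := by
    intro i j
    rw [Matrix.inv_def]
    simp only [Matrix.smul_apply, smul_eq_mul, norm_mul]
    rw [Ring.inverse_eq_inv', norm_inv]
    calc ‖Dt.det‖⁻¹ * ‖Dt.adjugate i j‖ ≤ (κ ^ m)⁻¹ * ((m.factorial : ℝ) * b ^ m) := by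
          refine mul_le_mul ?_ (hadj i j) (norm_nonneg _) (by positivity)
          rw [inv_le_inv₀ (lt_of_lt_of_le hκm hdetge) hκm]
          exact hdetge
      _ = ((m.factorial : ℝ) * b ^ m) / κ ^ m := by ring
  have hinv_norm : ‖Dt⁻¹‖ ≤ c₀ := by
    refine le_trans (l2_norm_le_sum_entries Dt⁻¹) ?_
    have : ∑ i, ∑ j, ‖Dt⁻¹ i j‖ ≤ ∑ _i : Fin m, ∑ _j : Fin m, ((m.factorial : ℝ) * b ^ m) / κ ^ m :=
      Finset.sum_le_sum fun i _ => Finset.sum_le_sum fun j _ => hinv_entry i j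
    refine le_trans this ?_
    simp only [Finset.sum_const, Finset.card_univ, Fintype.card_fin, nsmul_eq_mul]
    rw [hc₀]
    ring_nf
    exact le_of_eq (by ring)
  -- construct N
  refine ⟨-(R₁ * Dt⁻¹), Dt⁻¹ * R₂, ?_, ?_⟩
  · rw [Matrix.fromBlocks_multiply, Matrix.fromBlocks_multiply]
    have h1 : Dt * (Dt⁻¹ * R₂) = R₂ := by
      rw [← Matrix.mul_assoc, Matrix.mul_nonsing_inv Dt hdetunit, Matrix.one_mul]
    have h2 : (-(R₁ * Dt⁻¹)) * Dt = -R₁ := by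
      rw [Matrix.neg_mul, Matrix.mul_assoc, Matrix.nonsing_inv_mul Dt hdetunit, Matrix.mul_one]
    ext i j
    rcases i with i | i <;> rcases j with j | j <;>
      simp [Matrix.fromBlocks, h1, h2, Matrix.sub_apply]
  · -- norm bound
    set N₁ := -(R₁ * Dt⁻¹) with hN₁
    set N₂ := Dt⁻¹ * R₂ with hN₂
    set Rfull := Matrix.fromBlocks 0 R₁ R₂ 0 with hRfull
    have hR₁ : ‖R₁‖ ≤ (m:ℝ) * ‖Rfull‖ := by
      refine le_trans (l2_norm_le_sum_entries R₁) ?_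
      have : ∀ i j, ‖R₁ i j‖ ≤ ‖Rfull‖ := by
        intro i j
        have := entry_le_l2_norm Rfull (Sum.inl i) (Sum.inr j)
        simpa [hRfull, Matrix.fromBlocks] using this
      calc ∑ i, ∑ j, ‖R₁ i j‖ ≤ ∑ _i : Fin 1, ∑ _j : Fin m, ‖Rfull‖ :=
            Finset.sum_le_sum fun i _ => Finset.sum_le_sum fun j _ => this i j
        _ = (m:ℝ) * ‖Rfull‖ := by
            simp [Finset.sum_const, Finset.card_univ, mul_comm]
    have hR₂ : ‖R₂‖ ≤ (m:ℝ) * ‖Rfull‖ := by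
      refine le_trans (l2_norm_le_sum_entries R₂) ?_
      have : ∀ i j, ‖R₂ i j‖ ≤ ‖Rfull‖ := by
        intro i j
        have := entry_le_l2_norm Rfull (Sum.inr i) (Sum.inl j)
        simpa [hRfull, Matrix.fromBlocks] using this
      calc ∑ i, ∑ j, ‖R₂ i j‖ ≤ ∑ _i : Fin m, ∑ _j : Fin 1, ‖Rfull‖ :=
            Finset.sum_le_sum fun i _ => Finset.sum_le_sum fun j _ => this i j
        _ = (m:ℝ) * ‖Rfull‖ := by
            simp [Finset.sum_const, Finset.card_univ, mul_comm]
    have hN₁n : ‖N₁‖ ≤ ‖R₁‖ * c₀ := by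
      rw [hN₁, norm_neg]
      exact le_trans (Matrix.l2_opNorm_mul R₁ Dt⁻¹)
        (mul_le_mul_of_nonneg_left hinv_norm (norm_nonneg _))
    have hN₂n : ‖N₂‖ ≤ c₀ * ‖R₂‖ := by
      rw [hN₂]
      exact le_trans (Matrix.l2_opNorm_mul Dt⁻¹ R₂)
        (mul_le_mul_of_nonneg_right hinv_norm (norm_nonneg _))
    have hsplit : ‖Matrix.fromBlocks (0 : Matrix (Fin 1) (Fin 1) ℂ) N₁ N₂ 0‖
        ≤ (m:ℝ) * ‖N₁‖ + (m:ℝ) * ‖N₂‖ := by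
      refine le_trans (l2_norm_le_sum_entries _) ?_
      rw [Fintype.sum_sum_type]
      have e1 : ∀ i : Fin 1, ∑ j : Fin 1 ⊕ Fin m,
          ‖Matrix.fromBlocks (0 : Matrix (Fin 1) (Fin 1) ℂ) N₁ N₂ 0 (Sum.inl i) j‖
          = ∑ j : Fin m, ‖N₁ i j‖ := by
        intro i
        rw [Fintype.sum_sum_type]
        simp [Matrix.fromBlocks]
      have e2 : ∀ i : Fin m, ∑ j : Fin 1 ⊕ Fin m,
          ‖Matrix.fromBlocks (0 : Matrix (Fin 1) (Fin 1) ℂ) N₁ N₂ 0 (Sum.inr i) j‖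
          = ∑ j : Fin 1, ‖N₂ i j‖ := by
        intro i
        rw [Fintype.sum_sum_type]
        simp [Matrix.fromBlocks]
      rw [Finset.sum_congr rfl fun i _ => e1 i, Finset.sum_congr rfl fun i _ => e2 i]
      have b1 : ∑ i : Fin 1, ∑ j : Fin m, ‖N₁ i j‖ ≤ (m:ℝ) * ‖N₁‖ := by
        calc ∑ i : Fin 1, ∑ j : Fin m, ‖N₁ i j‖ ≤ ∑ _i : Fin 1, ∑ _j : Fin m, ‖N₁‖ :=
              Finset.sum_le_sum fun i _ => Finset.sum_le_sum fun j _ => entry_le_l2_norm N₁ i j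
          _ = (m:ℝ) * ‖N₁‖ := by simp [mul_comm]
      have b2 : ∑ i : Fin m, ∑ j : Fin 1, ‖N₂ i j‖ ≤ (m:ℝ) * ‖N₂‖ := by
        calc ∑ i : Fin m, ∑ j : Fin 1, ‖N₂ i j‖ ≤ ∑ _i : Fin m, ∑ _j : Fin 1, ‖N₂‖ :=
              Finset.sum_le_sum fun i _ => Finset.sum_le_sum fun j _ => entry_le_l2_norm N₂ i j
          _ = (m:ℝ) * ‖N₂‖ := by simp [mul_comm]
      exact add_le_add b1 b2
    have hm0 : (0:ℝ) ≤ (m:ℝ) := Nat.cast_nonneg m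
    have hRn : (0:ℝ) ≤ ‖Rfull‖ := norm_nonneg _
    calc ‖Matrix.fromBlocks (0 : Matrix (Fin 1) (Fin 1) ℂ) N₁ N₂ 0‖
        ≤ (m:ℝ) * ‖N₁‖ + (m:ℝ) * ‖N₂‖ := hsplit
      _ ≤ (m:ℝ) * (‖R₁‖ * c₀) + (m:ℝ) * (c₀ * ‖R₂‖) :=
          add_le_add (mul_le_mul_of_nonneg_left hN₁n hm0) (mul_le_mul_of_nonneg_left hN₂n hm0)
      _ ≤ (m:ℝ) * (((m:ℝ) * ‖Rfull‖) * c₀) + (m:ℝ) * (c₀ * ((m:ℝ) * ‖Rfull‖)) := by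
          gcongr
      _ = 2 * (m:ℝ)^2 * c₀ * ‖Rfull‖ := by ring
      _ ≤ (2 * (m:ℝ)^2 * c₀ + 1) * ‖Rfull‖ := by nlinarith
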